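/- Let f ∈ D[t;δ] be monic of degree m ≥ 2. Then f is right semi-invariant if and only if D ⊆ Nuc_r(S_f). -/

import Mathlib

open Finsupp

section Defs

variable {D R : Type*}

/-- `δ` is a derivation on the (possibly noncommutative) ring `D`. -/
def IsDeriv [Ring D] (δ : D → D) : Prop :=
  (∀ a b, δ (a + b) = δ a + δ b) ∧ ∀ a b, δ (a * b) = a * δ b + δ a * b

/-- `(R, i, t, coeff)` realizes the differential polynomial ring `D[t;δ]`:
`t * a = a * t + δ a` for `a ∈ D`, and every element of `R` is uniquely of
the form `∑ aₙ tⁿ`, the `aₙ` being recorded by the additive equivalence `coeff`. -/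
def IsDiffPolyRing [Ring D] [Ring R] (δ : D → D) (i : D →+* R) (t : R)
    (coeff : R ≃+ (ℕ →₀ D)) : Prop :=
  (∀ a : D, t * i a = i a * t + i (δ a)) ∧
    ∀ (n : ℕ) (a : D), coeff.symm (Finsupp.single n a) = i a * t ^ n

/-- `r` has degree `< m`. -/
def DegLt [Ring D] [Ring R] (coeff : R ≃+ (ℕ →₀ D)) (m : ℕ) (r : R) : Prop :=
  ∀ n, m ≤ n → coeff r n = 0

/-- `f` is monic of degree `m`. -/
def MonicDeg [Ring D] [Ring R] (coeff : R ≃+ (ℕ →₀ D)) (m : ℕ) (f : R) : Prop :=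
  coeff f m = 1 ∧ ∀ n, m < n → coeff f n = 0

/-- The carrier of the Petit algebra `S_f`: all polynomials of degree `< m`. -/
def SfSet [Ring D] [Ring R] (coeff : R ≃+ (ℕ →₀ D)) (m : ℕ) : Set R :=
  {r | DegLt coeff m r}

/-- `mul` is the Petit multiplication: `mul x y = x·y mod_r f`, i.e. `mul x y`
has degree `< m` and differs from `x·y` by a left multiple of `f`. -/
def IsPetitMul [Ring D] [Ring R] (coeff : R ≃+ (ℕ →₀ D)) (f : R) (m : ℕ)
    (mul : R → R → R) : Prop :=
  ∀ x y : R, DegLt coeff m (mul x y) ∧ ∃ q : R, x * y = q * f + mul x y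

/-- `f` is right semi-invariant: `f·a ∈ D·f` for all `a ∈ D`. -/
def RightSemiInvariant [Ring D] [Ring R] (i : D →+* R) (f : R) : Prop :=
  ∀ a : D, ∃ b : D, f * i a = i b * f

/-- `f` is two-sided (invariant): the left ideal `Rf` is a two-sided ideal. -/
def TwoSidedElem [Ring R] (f : R) : Prop :=
  ∀ r : R, ∃ q : R, f * r = q * f

/-- `f` (of degree `m`) is irreducible: it has no factorization into factors
of degree `< m`. -/
def IrredDeg [Ring D] [Ring R] (coeff : R ≃+ (ℕ →₀ D)) (m : ℕ) (f : R) : Prop :=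
  ¬∃ g h : R, f = g * h ∧ DegLt coeff m g ∧ DegLt coeff m h

/-- `f` (of degree `m`) is irreducible as a polynomial with coefficients in
the subfield `Fset` of `D`. -/
def IrredOver [Ring D] [Ring R] (coeff : R ≃+ (ℕ →₀ D)) (Fset : Set D) (m : ℕ)
    (f : R) : Prop :=
  ¬∃ g h : R, f = g * h ∧ DegLt coeff m g ∧ DegLt coeff m h ∧
    (∀ n, coeff g n ∈ Fset) ∧ ∀ n, coeff h n ∈ Fset

/-- Left nucleus of the algebra `(S, mul)`. -/
def LeftNuc [Ring R] (S : Set R) (mul : R → R → R) : Set R :=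
  {x ∈ S | ∀ y ∈ S, ∀ z ∈ S, mul (mul x y) z = mul x (mul y z)}

/-- Middle nucleus of the algebra `(S, mul)`. -/
def MidNuc [Ring R] (S : Set R) (mul : R → R → R) : Set R :=
  {x ∈ S | ∀ y ∈ S, ∀ z ∈ S, mul (mul y x) z = mul y (mul x z)}

/-- Right nucleus of the algebra `(S, mul)`. -/
def RightNuc [Ring R] (S : Set R) (mul : R → R → R) : Set R :=
  {x ∈ S | ∀ y ∈ S, ∀ z ∈ S, mul (mul y z) x = mul y (mul z x)}

/-- `(S, mul)` is a division algebra: all nonzero left and right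
multiplications are bijective. -/
def IsDivAlg [Ring R] (S : Set R) (mul : R → R → R) : Prop :=
  ∀ x ∈ S, x ≠ 0 → Set.BijOn (mul x) S S ∧ Set.BijOn (fun y => mul y x) S S

/-- `(S, mul)` is associative. -/
def IsAssocOn [Ring R] (S : Set R) (mul : R → R → R) : Prop :=
  ∀ x ∈ S, ∀ y ∈ S, ∀ z ∈ S, mul (mul x y) z = mul x (mul y z)

/-- The constants of `δ`. -/
def ConstSet [Ring D] (δ : D → D) : Set D := {a | δ a = 0}

/-- The center of `D`. -/
def CenterSet (D : Type*) [Ring D] : Set D := {a | ∀ b, a * b = b * a}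

/-- `F₀ = Const(δ) ∩ C(D)`. -/
def F0Set [Ring D] (δ : D → D) : Set D := ConstSet δ ∩ CenterSet D

/-- The elements of the Petit algebra all of whose coefficients lie in `Fset`,
e.g. `Fset ⊕ Fset·t ⊕ ⋯ ⊕ Fset·t^{m-1}`. -/
def SubCoeffSet [Ring D] [Ring R] (coeff : R ≃+ (ℕ →₀ D)) (m : ℕ)
    (Fset : Set D) : Set R :=
  {r | DegLt coeff m r ∧ ∀ n, coeff r n ∈ Fset}

/-- `S ⊆ R` has dimension `k` over the subfield `Fset ⊆ D` (acting through `i`):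
there is an `Fset`-basis of size `k`. -/
def HasDim [Ring D] [Ring R] (Fset : Set D) (i : D →+* R) (S : Set R) (k : ℕ) : Prop :=
  ∃ b : Fin k → R, (∀ j, b j ∈ S) ∧
    ∀ x ∈ S, ∃! c : Fin k → D, (∀ j, c j ∈ Fset) ∧ x = ∑ j, i (c j) * b j

/-- `S ⊆ D` has dimension `k` over the subfield `Fset ⊆ D`. -/
def HasDimIn [Ring D] (Fset : Set D) (S : Set D) (k : ℕ) : Prop :=
  ∃ b : Fin k → D, (∀ j, b j ∈ S) ∧
    ∀ x ∈ S, ∃! c : Fin k → D, (∀ j, c j ∈ Fset) ∧ x = ∑ j, c j * b j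

/-- Substitution of `x` for `t` in `r = ∑ aₙ tⁿ`. -/
noncomputable def substT [Ring D] [Ring R] (coeff : R ≃+ (ℕ →₀ D)) (i : D →+* R) (r x : R) : R :=
  (coeff r).sum fun n c => i c * x ^ n

/-- `V_f(b)`: the constant `f(t) − f(t−b)`. -/
noncomputable def Vf [Ring D] [Ring R] (coeff : R ≃+ (ℕ →₀ D)) (i : D →+* R) (t f : R) (b : D) : D :=
  coeff (f - substT coeff i f (t - i b)) 0

/-- `V_p(b)`: the constant with `(t−b)^p = t^p − V_p(b)`. -/
noncomputable def Vp [Ring D] [Ring R] (coeff : R ≃+ (ℕ →₀ D)) (i : D →+* R) (t : R) (p : ℕ)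
    (b : D) : D :=
  coeff (t ^ p - (t - i b) ^ p) 0

/-- For commutative coefficients, `V_p(b) = b^p + δ^{p−1}(b)`. -/
def VpFun [Ring D] (δ : D → D) (p : ℕ) : D → D := fun b => b ^ p + δ^[p - 1] b

/-- `V(a) = V_{p^e}(a) + c₁ V_{p^{e−1}}(a) + ⋯ + c_e a`, computed with
`V_p(b) = b^p + δ^{p−1}(b)` (commutative case). -/
def Vg [Ring D] (δ : D → D) (p e : ℕ) (c : Fin e → D) : D → D :=
  fun a => (VpFun δ p)^[e] a + ∑ j : Fin e, c j * (VpFun δ p)^[e - 1 - (j : ℕ)] a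

/-- `V(a) = V_{p^e}(a) + c₁ V_{p^{e−1}}(a) + ⋯ + c_e a`, with `V_p` defined by
the identity `(t−b)^p = t^p − V_p(b)` in `D[t;δ]`. -/
noncomputable def VgR [Ring D] [Ring R] (coeff : R ≃+ (ℕ →₀ D)) (i : D →+* R) (t : R) (p e : ℕ)
    (c : Fin e → D) : D → D :=
  fun a => (Vp coeff i t p)^[e] a + ∑ j : Fin e, c j * (Vp coeff i t p)^[e - 1 - (j : ℕ)] a

/-- The map `G_{id,−a}` sending `∑ bₙ tⁿ` to `∑ bₙ (t−a)ⁿ`. -/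
noncomputable def Gmap [Ring D] [Ring R] (coeff : R ≃+ (ℕ →₀ D)) (i : D →+* R) (t : R) (a : D) :
    R → R :=
  fun r => substT coeff i r (t - i a)

/-- `H` is an isomorphism of `Fset`-algebras from `(S, mul)` onto `(S', mul')`. -/
def IsAlgIso [Ring D] [Ring R] (Fset : Set D) (i : D →+* R) (S S' : Set R)
    (mul mul' : R → R → R) (H : R → R) : Prop :=
  Set.BijOn H S S' ∧ (∀ x ∈ S, ∀ y ∈ S, H (x + y) = H x + H y) ∧
    (∀ x ∈ S, ∀ y ∈ S, H (mul x y) = mul' (H x) (H y)) ∧ H 1 = 1 ∧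
    ∀ a ∈ Fset, ∀ x ∈ S, H (i a * x) = i a * H x

/-- `H` is an `Fset`-algebra automorphism of the Petit algebra `(S, mul)`. -/
def IsAut [Ring D] [Ring R] (Fset : Set D) (i : D →+* R) (S : Set R)
    (mul : R → R → R) (H : R → R) : Prop :=
  IsAlgIso Fset i S S mul mul H

/-- The operator `δ^{p^e} + c₁ δ^{p^{e−1}} + ⋯ + c_e δ` vanishes on `Cset`,
i.e. the `p`-polynomial `t^{p^e} + c₁ t^{p^{e−1}} + ⋯ + c_e t` annihilates `δ|_{Cset}`. -/
def PPolyAnnOn [Ring D] (δ : D → D) (Cset : Set D) (p e : ℕ) (c : Fin e → D) : Prop :=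
  ∀ a ∈ Cset, δ^[p ^ e] a + ∑ j : Fin e, c j * δ^[p ^ (e - 1 - (j : ℕ))] a = 0

/-- `t^{p^e} + c₁ t^{p^{e−1}} + ⋯ + c_e t` (coefficients in `Fset`) is the minimum
`p`-polynomial of `δ` restricted to `Cset`. -/
def IsMinPPoly [Ring D] (δ : D → D) (Cset Fset : Set D) (p e : ℕ)
    (c : Fin e → D) : Prop :=
  (∀ j, c j ∈ Fset) ∧ PPolyAnnOn δ Cset p e c ∧
    ∀ e' : ℕ, e' < e → ∀ c' : Fin e' → D, (∀ j, c' j ∈ Fset) →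
      ¬PPolyAnnOn δ Cset p e' c'

/-- The natural map from `D[X]` to `R`, `∑ aₙ Xⁿ ↦ ∑ aₙ tⁿ`. -/
noncomputable def polyToR [Ring D] [Ring R] (i : D →+* R) (t : R) (q : Polynomial D) : R :=
  q.sum fun n a => i a * t ^ n

/-- The element `f ∈ R` rewritten as an ordinary polynomial in `D[X]`. -/
noncomputable def coeffPoly [Ring D] [Ring R] (coeff : R ≃+ (ℕ →₀ D)) (f : R) : Polynomial D :=
  (coeff f).sum fun n a => Polynomial.C a * Polynomial.X ^ n

/-- The set `T = Fset ⊕ Fset·t ⊕ ⋯ ⊕ Fset·t^{m−1} ⊆ S_f` is isomorphic, as a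
ring, to the quotient `Fset[X]/(f)`: the natural map `θ : ∑ aₙ Xⁿ ↦ ∑ aₙ tⁿ`,
from polynomials over `Fset` of degree `< m` with multiplication given by
reduction mod `f`, is a bijection onto `T` respecting all the operations. -/
def IsPolyQuotIso [Ring D] [Ring R] (Fset : Set D) (i : D →+* R)
    (coeff : R ≃+ (ℕ →₀ D)) (t f : R) (m : ℕ) (mul : R → R → R) (T : Set R) : Prop :=
  Set.BijOn (polyToR i t)
    {q : Polynomial D | (∀ n, q.coeff n ∈ Fset) ∧ q.degree < (m : WithBot ℕ)} T ∧
  (∀ q q' : Polynomial D, polyToR i t (q + q') = polyToR i t q + polyToR i t q') ∧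
  polyToR i t 1 = 1 ∧
  ∀ q ∈ {q : Polynomial D | (∀ n, q.coeff n ∈ Fset) ∧ q.degree < (m : WithBot ℕ)},
    ∀ q' ∈ {q : Polynomial D | (∀ n, q.coeff n ∈ Fset) ∧ q.degree < (m : WithBot ℕ)},
      ∃ s r : Polynomial D, q * q' = s * coeffPoly coeff f + r ∧
        r.degree < (m : WithBot ℕ) ∧
        polyToR i t r = mul (polyToR i t q) (polyToR i t q')

end Defs

section Proof1Helpers

variable {D R : Type*} [DivisionRing D] [Ring R] {δ : D → D}
  {i : D →+* R} {t : R} {coeff : R ≃+ (ℕ →₀ D)}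

theorem delta_zero (hδ : IsDeriv δ) : δ 0 = 0 := by
  have h := hδ.1 0 0
  rw [add_zero] at h
  exact (left_eq_add.mp h)

theorem coeff_i_tn (hR : IsDiffPolyRing δ i t coeff) (a : D) (n : ℕ) :
    coeff (i a * t ^ n) = Finsupp.single n a := by
  rw [← hR.2 n a, AddEquiv.apply_symm_apply]

theorem coeff_i (hR : IsDiffPolyRing δ i t coeff) (a : D) :
    coeff (i a) = Finsupp.single 0 a := by
  have := coeff_i_tn hR a 0
  rwa [pow_zero, mul_one] at this

theorem expand (hR : IsDiffPolyRing δ i t coeff) (x : R) :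
    x = (coeff x).sum fun n a => i a * t ^ n := by
  conv_lhs => rw [← coeff.symm_apply_apply x, ← Finsupp.sum_single (coeff x)]
  rw [map_finsuppSum]
  exact Finsupp.sum_congr fun n _ => hR.2 n _

theorem coeff_ia_mul (hR : IsDiffPolyRing δ i t coeff) (a : D) (x : R) (n : ℕ) :
    coeff (i a * x) n = a * coeff x n := by
  have key : ∀ v : ℕ →₀ D, coeff (i a * coeff.symm v) n = a * v n := by
    intro v
    induction v using Finsupp.induction with
    | zero => simp
    | single_add k b w _ _ ih =>
      rw [map_add, mul_add, map_add, Finsupp.add_apply, Finsupp.add_apply, mul_add, ih,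
        hR.2 k b, ← mul_assoc, ← map_mul, coeff_i_tn hR]
      by_cases h : k = n <;> simp [Finsupp.single_apply, h]
  have h := key (coeff x)
  rwa [coeff.symm_apply_apply] at h

theorem coeff_t_mul_succ (hδ : IsDeriv δ) (hR : IsDiffPolyRing δ i t coeff) (x : R) (n : ℕ) :
    coeff (t * x) (n + 1) = coeff x n + δ (coeff x (n + 1)) := by
  have key : ∀ v : ℕ →₀ D, coeff (t * coeff.symm v) (n + 1) = v n + δ (v (n + 1)) := by
    intro v
    induction v using Finsupp.induction with
    | zero => simp [delta_zero hδ]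
    | single_add k b w _ _ ih =>
      have hc : coeff (t * coeff.symm (Finsupp.single k b + w)) =
          Finsupp.single (k+1) b + Finsupp.single k (δ b) + coeff (t * coeff.symm w) := by
        rw [map_add, mul_add, map_add, hR.2 k b, ← mul_assoc, hR.1, add_mul,
          mul_assoc, ← pow_succ', map_add, coeff_i_tn hR, coeff_i_tn hR]
      rw [hc, Finsupp.add_apply, Finsupp.add_apply, Finsupp.add_apply, Finsupp.add_apply,
        ih, hδ.1]
      have h2 : (Finsupp.single (k+1) b) (n+1) = (Finsupp.single k b) n := by
        by_cases h : k = n <;> simp [Finsupp.single_apply, h]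
      have h3 : (Finsupp.single k (δ b)) (n+1) = δ ((Finsupp.single k b) (n+1)) := by
        by_cases h : k = n + 1 <;> simp [Finsupp.single_apply, h, delta_zero hδ]
      rw [h2, h3]
      abel
  have h := key (coeff x)
  rwa [coeff.symm_apply_apply] at h

theorem tpow_mul (hδ : IsDeriv δ) (hR : IsDiffPolyRing δ i t coeff) (n : ℕ) (y : R) (e : ℕ)
    (hy : ∀ k, e < k → coeff y k = 0) :
    (∀ k, e + n < k → coeff (t ^ n * y) k = 0) ∧ coeff (t ^ n * y) (e + n) = coeff y e := by
  induction n with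
  | zero =>
    constructor
    · intro k hk
      rw [pow_zero, one_mul]
      exact hy k (by omega)
    · rw [pow_zero, one_mul, add_zero]
  | succ n ih =>
    have hs := ih
    constructor
    · intro k hk
      obtain ⟨j, rfl⟩ : ∃ j, k = j + 1 := ⟨k - 1, by omega⟩
      rw [pow_succ', mul_assoc, coeff_t_mul_succ hδ hR]
      rw [hs.1 j (by omega), hs.1 (j+1) (by omega), delta_zero hδ, add_zero]
    · have : e + (n + 1) = (e + n) + 1 := by omega
      rw [this, pow_succ', mul_assoc, coeff_t_mul_succ hδ hR, hs.2,
        hs.1 (e + n + 1) (by omega), delta_zero hδ, add_zero]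

theorem mul_bound (hδ : IsDeriv δ) (hR : IsDiffPolyRing δ i t coeff) (x y : R) (d e : ℕ)
    (hx : ∀ k, d < k → coeff x k = 0) (hy : ∀ k, e < k → coeff y k = 0) :
    (∀ k, d + e < k → coeff (x * y) k = 0) ∧
      coeff (x * y) (d + e) = coeff x d * coeff y e := by
  have hxy : x * y = (coeff x).sum fun n a => i a * (t ^ n * y) := by
    conv_lhs => rw [expand hR x]
    rw [Finsupp.sum_mul]
    exact Finsupp.sum_congr fun n _ => mul_assoc _ _ _
  have hcoeff : ∀ k, coeff (x * y) k =
      ∑ n ∈ (coeff x).support, (coeff x) n * coeff (t ^ n * y) k := by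
    intro k
    rw [hxy, map_finsuppSum]
    rw [Finsupp.sum_apply]
    exact Finset.sum_congr rfl fun n _ => coeff_ia_mul hR _ _ _
  have hsupp : ∀ n ∈ (coeff x).support, n ≤ d := by
    intro n hn
    by_contra h
    exact Finsupp.mem_support_iff.mp hn (hx n (by omega))
  constructor
  · intro k hk
    rw [hcoeff]
    refine Finset.sum_eq_zero fun n hn => ?_
    rw [(tpow_mul hδ hR n y e hy).1 k (by have := hsupp n hn; omega), mul_zero]
  · rw [hcoeff]
    rw [Finset.sum_eq_single d]
    · rw [add_comm d e, (tpow_mul hδ hR d y e hy).2]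
    · intro n hn hne
      rw [(tpow_mul hδ hR n y e hy).1 (d + e)
        (by have := hsupp n hn; omega), mul_zero]
    · intro hd
      rw [Finsupp.notMem_support_iff.mp hd, zero_mul]

end Proof1Helpers

section Proof1Main

variable {D R : Type*} [DivisionRing D] [Ring R] {δ : D → D}
  {i : D →+* R} {t : R} {coeff : R ≃+ (ℕ →₀ D)}

theorem q_eq_zero (hδ : IsDeriv δ) (hR : IsDiffPolyRing δ i t coeff)
    {f : R} {m : ℕ} (hf : MonicDeg coeff m f) {q : R}
    (h : ∀ k, m ≤ k → coeff (q * f) k = 0) : q = 0 := by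
  by_contra hq
  have hv : coeff q ≠ 0 := fun hz => hq (by
    have := congrArg coeff.symm hz
    rwa [coeff.symm_apply_apply, map_zero] at this)
  have hs : (coeff q).support.Nonempty := Finsupp.support_nonempty_iff.mpr hv
  set d := (coeff q).support.max' hs with hd
  have hdq : ∀ k, d < k → coeff q k = 0 := by
    intro k hk
    by_contra hc
    exact absurd (Finset.le_max' _ k (Finsupp.mem_support_iff.mpr hc)) (by omega)
  have hfb : ∀ k, m < k → coeff f k = 0 := hf.2
  have htop := (mul_bound hδ hR q f d m hdq hfb).2
  rw [hf.1, mul_one] at htop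
  have hd0 : coeff q d ≠ 0 :=
    Finsupp.mem_support_iff.mp ((coeff q).support.max'_mem hs)
  exact hd0 (htop ▸ h (d + m) (by omega))

theorem rem_unique (hδ : IsDeriv δ) (hR : IsDiffPolyRing δ i t coeff)
    {f : R} {m : ℕ} (hf : MonicDeg coeff m f) {q q' r r' : R}
    (hr : DegLt coeff m r) (hr' : DegLt coeff m r')
    (h : q * f + r = q' * f + r') : r = r' := by
  have hqq : (q - q') * f = r' - r := by
    rw [sub_mul, sub_eq_sub_iff_add_eq_add, h, add_comm]
  have hz : q - q' = 0 := by
    refine q_eq_zero hδ hR hf fun k hk => ?_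
    rw [hqq, map_sub, Finsupp.sub_apply, hr k hk, hr' k hk, sub_zero]
  rw [hz, zero_mul] at hqq
  exact (sub_eq_zero.mp hqq.symm).symm

theorem mulS_eq (hδ : IsDeriv δ) (hR : IsDiffPolyRing δ i t coeff)
    {f : R} {m : ℕ} (hf : MonicDeg coeff m f) {mulS : R → R → R}
    (hmulS : IsPetitMul coeff f m mulS) {x y q' r' : R}
    (h : x * y = q' * f + r') (hr' : DegLt coeff m r') : mulS x y = r' := by
  obtain ⟨h1, q, h2⟩ := hmulS x y
  exact rem_unique hδ hR hf h1 hr' (by rw [← h2, ← h])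

theorem degLt_mul_const (hδ : IsDeriv δ) (hR : IsDiffPolyRing δ i t coeff)
    {m : ℕ} (hm : 1 ≤ m) {x : R} (hx : DegLt coeff m x) (a : D) :
    DegLt coeff m (x * i a) := by
  obtain ⟨d, rfl⟩ : ∃ d, m = d + 1 := ⟨m - 1, by omega⟩
  intro k hk
  have hx' : ∀ j, d < j → coeff x j = 0 := fun j hj => hx j (by omega)
  have hia : ∀ j, 0 < j → coeff (i a) j = 0 := by
    intro j hj
    rw [coeff_i hR, Finsupp.single_apply, if_neg (by omega)]
  have := (mul_bound hδ hR x (i a) d 0 hx' hia).1 k (by omega)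
  exact this

theorem coeff_tpow (hR : IsDiffPolyRing δ i t coeff) (n : ℕ) :
    coeff (t ^ n) = Finsupp.single n 1 := by
  rw [← coeff_i_tn hR 1 n, map_one, one_mul]

end Proof1Main
/-- `f` (monic of degree `m ≥ 2`) is right semi-invariant iff
`D ⊆ Nuc_r(S_f)`. -/
theorem stmt_1 {D R : Type*} [DivisionRing D] [Ring R]
    (δ : D → D) (hδ : IsDeriv δ) (hδ0 : δ ≠ 0)
    (i : D →+* R) (t : R) (coeff : R ≃+ (ℕ →₀ D))
    (hR : IsDiffPolyRing δ i t coeff)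
    (f : R) (m : ℕ) (hm : 2 ≤ m) (hf : MonicDeg coeff m f)
    (mulS : R → R → R) (hmulS : IsPetitMul coeff f m mulS) :
    RightSemiInvariant i f ↔ ∀ a : D, i a ∈ RightNuc (SfSet coeff m) mulS := by
  constructor
  · intro hsi a
    refine ⟨?_, ?_⟩
    · intro n hn
      rw [coeff_i hR, Finsupp.single_apply, if_neg (by omega)]
    · intro y hy z hz
      obtain ⟨hwdeg, q, hq⟩ := hmulS y z
      obtain ⟨b, hb⟩ := hsi a
      have hza : mulS z (i a) = z * i a :=
        mulS_eq hδ hR hf hmulS (by rw [zero_mul, zero_add])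
          (degLt_mul_const hδ hR (by omega) hz a)
      have hwa : mulS (mulS y z) (i a) = mulS y z * i a :=
        mulS_eq hδ hR hf hmulS (by rw [zero_mul, zero_add])
          (degLt_mul_const hδ hR (by omega) hwdeg a)
      have hyza : mulS y (z * i a) = mulS y z * i a := by
        refine mulS_eq (q' := q * i b) hδ hR hf hmulS ?_ (degLt_mul_const hδ hR (by omega) hwdeg a)
        rw [← mul_assoc, hq, add_mul, mul_assoc q f (i a), hb, ← mul_assoc]
      rw [hza, hyza, hwa]
  · intro hnuc a
    obtain ⟨hr, q, hq⟩ := hmulS f (i a)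
    set r := mulS f (i a) with hrdef
    have htm1 : DegLt coeff m (t ^ (m-1)) := by
      intro n hn; rw [coeff_tpow hR, Finsupp.single_apply, if_neg (by omega)]
    have ht : DegLt coeff m t := by
      intro n hn
      rw [← pow_one t, coeff_tpow hR, Finsupp.single_apply, if_neg (by omega)]
    have htm : t ^ (m-1) * t = t ^ m := by
      rw [← pow_succ]
      congr 1
      omega
    have hwdeg : DegLt coeff m (t ^ m - f) := by
      intro n hn
      rw [map_sub, Finsupp.sub_apply, coeff_tpow hR]
      rcases Nat.lt_or_ge m n with h | h
      · rw [Finsupp.single_apply, if_neg (by omega), hf.2 n h, sub_zero]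
      · have hnm : n = m := by omega
        rw [hnm, Finsupp.single_apply, if_pos rfl, hf.1, sub_self]
    have hw : mulS (t ^ (m-1)) t = t ^ m - f := by
      refine mulS_eq (q' := 1) hδ hR hf hmulS ?_ hwdeg
      rw [htm, one_mul]
      abel
    have hta : mulS t (i a) = t * i a := by
      refine mulS_eq hδ hR hf hmulS (by rw [zero_mul, zero_add]) ?_
      intro n hn
      rw [hR.1 a, map_add, Finsupp.add_apply, ← pow_one t, coeff_i_tn hR, coeff_i hR,
        Finsupp.single_apply, if_neg (by omega), Finsupp.single_apply, if_neg (by omega),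
        add_zero]
    have hwa : mulS (t ^ m - f) (i a) = (t ^ m - f) * i a :=
      mulS_eq hδ hR hf hmulS (by rw [zero_mul, zero_add])
        (degLt_mul_const hδ hR (by omega) hwdeg a)
    have hkey : mulS (t ^ (m-1)) (t * i a) = r + (t ^ m - f) * i a := by
      refine mulS_eq (q' := q) hδ hR hf hmulS ?_ ?_
      · rw [← mul_assoc, htm]
        have e1 : t ^ m * i a = f * i a + (t ^ m - f) * i a := by
          rw [← add_mul]
          congr 1
          abel
        rw [e1, hq, add_assoc]
      · intro n hn
        rw [map_add, Finsupp.add_apply, hr n hn,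
          degLt_mul_const hδ hR (by omega) hwdeg a n hn, add_zero]
    have hn := (hnuc a).2 (t ^ (m-1)) htm1 t ht
    rw [hw, hta, hwa, hkey] at hn
    have hr0 : r = 0 := by
      have h0 : r + (t ^ m - f) * i a = 0 + (t ^ m - f) * i a := by
        rw [zero_add]; exact hn.symm
      exact add_right_cancel h0
    have hfi : ∀ k, m < k → coeff (f * i a) k = 0 := by
      intro k hk
      have hia0 : ∀ j, 0 < j → coeff (i a) j = 0 := fun j hj => by
        rw [coeff_i hR, Finsupp.single_apply, if_neg (by omega)]
      have h1 := (mul_bound hδ hR f (i a) m 0 hf.2 hia0).1 k (by omega)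
      exact h1
    have hq' : f * i a = q * f := by rw [hq, hr0, add_zero]
    have hqc : ∀ k, 1 ≤ k → coeff q k = 0 := by
      by_contra hc
      push_neg at hc
      obtain ⟨k0, hk1, hk0⟩ := hc
      have hs : (coeff q).support.Nonempty := ⟨k0, Finsupp.mem_support_iff.mpr hk0⟩
      set d := (coeff q).support.max' hs with hdd
      have hd1 : 1 ≤ d := le_trans hk1 (Finset.le_max' _ k0 (Finsupp.mem_support_iff.mpr hk0))
      have hdq : ∀ j, d < j → coeff q j = 0 := fun j hj => by
        by_contra hcc
        exact absurd (Finset.le_max' _ j (Finsupp.mem_support_iff.mpr hcc)) (by omega)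
      have htop := (mul_bound hδ hR q f d m hdq hf.2).2
      rw [hf.1, mul_one, ← hq'] at htop
      have hd0 : coeff q d ≠ 0 := Finsupp.mem_support_iff.mp ((coeff q).support.max'_mem hs)
      exact hd0 (by rw [← htop]; exact hfi (d + m) (by omega))
    refine ⟨coeff q 0, ?_⟩
    have hqi : q = i (coeff q 0) := by
      have hsingle : coeff q = Finsupp.single 0 (coeff q 0) := by
        ext k
        rcases Nat.eq_zero_or_pos k with rfl | hk
        · simp
        · rw [hqc k hk, Finsupp.single_apply, if_neg (by omega)]
      have h2 := congrArg coeff.symm hsingle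
      rwa [coeff.symm_apply_apply, hR.2 0, pow_zero, mul_one] at h2
    rw [hq', ← hqi]
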